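/- arXiv:2409.09472 — 2 statements merged into one kernel-verified Lean document; each statement's English description precedes it below -/
import Mathlib

section
/- Let p be prime and d ≥ r ≥ 1. Define s_{p^m} = ∑_{j=0}^{m} J₂(p^j)·σ̄^{p^j} as an arithmetic function. If the family of arithmetic functions s_{p^d}[p^r] satisfies the triangular system p^{2r}·s_{p^{d−r}} = ∑_{j=0}^{r} J₂(p^j)·s_{p^d}[p^j] for all 0 ≤ r ≤ d with s_{p^d}[1] = s_{p^d}, then s_{p^d}[p^r] = s_{p^{d−r}} − p^{2d−2r}·σ̄^{p^{d−r+1}} for 1 ≤ r ≤ d. -/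
open Finset

/-- The second Jordan totient `J₂ = μ * Id²`, as a rational-valued arithmetic function. -/
def J2 (n : ℕ) : ℚ := ∑ d ∈ n.divisors, (ArithmeticFunction.moebius d : ℚ) * ((n / d : ℕ) : ℚ) ^ 2

/-- `σ̄^m(a) = σ(a/m)` if `m ∣ a`, and `0` otherwise. -/
def sigmaBar (m a : ℕ) : ℚ := if m ∣ a then ∑ e ∈ (a / m).divisors, (e : ℚ) else 0

/-- `s_{p^m} = ∑_{j=0}^{m} J₂(p^j)·σ̄^{p^j}` as an arithmetic function. -/
def sPow (p m : ℕ) (a : ℕ) : ℚ := ∑ j ∈ Finset.range (m + 1), J2 (p ^ j) * sigmaBar (p ^ j) a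

/-- `J₂(p^{j+1}) = p^{2j+2} - p^{2j}` for `p` prime. -/
lemma J2_prime_pow {p : ℕ} (hp : p.Prime) (j : ℕ) :
    J2 (p ^ (j + 1)) = (p : ℚ) ^ (2 * j + 2) - (p : ℚ) ^ (2 * j) := by
  unfold J2
  rw [Nat.sum_divisors_prime_pow hp, Finset.sum_range_succ', Finset.sum_range_succ']
  have h0 : ∀ i, (ArithmeticFunction.moebius (p ^ (i + 1 + 1)) : ℚ)
      * ((p ^ (j+1) / p ^ (i + 1 + 1) : ℕ) : ℚ) ^ 2 = 0 := by
    intro i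
    rw [ArithmeticFunction.moebius_apply_prime_pow hp (by omega), if_neg (by omega)]
    simp
  rw [Finset.sum_congr rfl fun i _ => h0 i, Finset.sum_const, smul_zero]
  simp only [zero_add, pow_zero, pow_one, Nat.div_one, ArithmeticFunction.moebius_apply_one]
  rw [ArithmeticFunction.moebius_apply_prime hp,
    show p ^ (j+1) / p = p ^ j by rw [pow_succ]; exact Nat.mul_div_cancel _ hp.pos]
  push_cast [← pow_mul]
  ring

/-- If the family `t r = s_{p^d}[p^r]` solves the triangular system
`p^{2r}·s_{p^{d−r}} = ∑_{j=0}^{r} J₂(p^j)·s_{p^d}[p^j]` for `0 ≤ r ≤ d` with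
`s_{p^d}[1] = s_{p^d}`, then `s_{p^d}[p^r] = s_{p^{d−r}} − p^{2d−2r}·σ̄^{p^{d−r+1}}`
for `1 ≤ r ≤ d`. -/
theorem triangular_system_solution (p d : ℕ) (hp : p.Prime) (hd : 1 ≤ d)
    (t : ℕ → ℕ → ℚ)
    (ht0 : ∀ a, 0 < a → t 0 a = sPow p d a)
    (hsys : ∀ r, r ≤ d → ∀ a, 0 < a →
      (p : ℚ) ^ (2 * r) * sPow p (d - r) a
        = ∑ j ∈ Finset.range (r + 1), J2 (p ^ j) * t j a) :
    ∀ r, 1 ≤ r → r ≤ d → ∀ a, 0 < a →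
      t r a = sPow p (d - r) a - (p : ℚ) ^ (2 * d - 2 * r) * sigmaBar (p ^ (d - r + 1)) a := by
  intro r hr1 hrd a ha
  obtain ⟨s, rfl⟩ : ∃ s, r = s + 1 := ⟨r - 1, by omega⟩
  obtain ⟨k, rfl⟩ : ∃ k, d = k + (s + 1) := ⟨d - (s+1), by omega⟩
  have h1 := hsys (s + 1) hrd a ha
  have h2 := hsys s (by omega) a ha
  rw [show k + (s+1) - (s+1) = k from by omega] at h1
  rw [show k + (s+1) - s = k + 1 from by omega] at h2
  rw [Finset.sum_range_succ] at h1
  rw [← h2] at h1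
  have hS : sPow p (k + 1) a = sPow p k a + J2 (p ^ (k + 1)) * sigmaBar (p ^ (k + 1)) a := by
    unfold sPow; rw [Finset.sum_range_succ]
  rw [hS, J2_prime_pow hp s, J2_prime_pow hp k] at h1
  rw [show k + (s+1) - (s+1) = k from by omega,
    show 2 * (k + (s+1)) - 2 * (s+1) = 2 * k from by omega]
  have hppos : (0:ℚ) < (p:ℚ) := by exact_mod_cast hp.pos
  have hp1 : (1:ℚ) < (p:ℚ) := by exact_mod_cast hp.one_lt
  have hJ : ((p:ℚ) ^ (2 * s + 2) - (p:ℚ) ^ (2 * s)) ≠ 0 := by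
    have : (p:ℚ) ^ (2 * s) < (p:ℚ) ^ (2 * s + 2) := by
      apply pow_lt_pow_right₀ hp1; omega
    linarith
  apply mul_left_cancel₀ hJ
  rw [show 2 * (s + 1) = 2 * s + 2 from by omega] at h1
  linear_combination -h1
end

section
/- Define for d | δ the element 𝛔_δ(a) = ∑_{d | δ} σ̄^{δ/d}(a)·𝛝_δ(d) in ℚ[Tor_δ(E)], where 𝛝_δ(d) = ∏_p (ϑ_{p^{ν_p(d)}} − [ν_p(d) < ν_p(δ)]·ϑ_{p^{ν_p(d)+1}}). Then 𝛔_δ(a)·ϑ_{δ/gcd(a,δ)} = 𝛔_δ(a). -/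
open Finset

/-- `ϑ_m = (1/m²)·∑_{m·θ = 0} (θ)` in the group algebra `ℚ[(ℤ/δℤ)²]`. -/
noncomputable def theta (δ : ℕ) [NeZero δ] (m : ℕ) :
    AddMonoidAlgebra ℚ (ZMod δ × ZMod δ) :=
  ((m : ℚ) ^ 2)⁻¹ •
    ∑ θ ∈ Finset.univ.filter (fun θ : ZMod δ × ZMod δ => m • θ = 0),
      AddMonoidAlgebra.single θ 1

/-- `𝛝_δ(d) = ∏_p (ϑ_{p^{ν_p(d)}} − [ν_p(d) < ν_p(δ)]·ϑ_{p^{ν_p(d)+1}})`. -/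
noncomputable def bvartheta (δ : ℕ) [NeZero δ] (d : ℕ) :
    AddMonoidAlgebra ℚ (ZMod δ × ZMod δ) :=
  ∏ p ∈ δ.primeFactors,
    (theta δ (p ^ d.factorization p) -
      if d.factorization p < δ.factorization p
        then theta δ (p ^ (d.factorization p + 1)) else 0)

/-- `𝛔_δ(a) = ∑_{d ∣ δ} σ̄^{δ/d}(a)·𝛝_δ(d)` in `ℚ[(ℤ/δℤ)²]`. -/
noncomputable def bsigma (δ : ℕ) [NeZero δ] (a : ℕ) :
    AddMonoidAlgebra ℚ (ZMod δ × ZMod δ) :=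
  ∑ d ∈ δ.divisors, sigmaBar (δ / d) a • bvartheta δ d

open Finset AddMonoidAlgebra


lemma card_tor (δ n : ℕ) [NeZero δ] (hn : n ∣ δ) (hn0 : n ≠ 0) :
    (Finset.univ.filter (fun x : ZMod δ => n • x = 0)).card = n := by
  have hδ : δ ≠ 0 := NeZero.ne δ
  have hδpos : 0 < δ := Nat.pos_of_ne_zero hδ
  have hd0 : 0 < δ / n := Nat.div_pos (Nat.le_of_dvd hδpos hn) (Nat.pos_of_ne_zero hn0)
  have hmem : ∀ x : ZMod δ, (n • x = 0) ↔ (δ / n) ∣ x.val := by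
    intro x
    have hx : n • x = ((n * x.val : ℕ) : ZMod δ) := by
      push_cast [ZMod.natCast_zmod_val]; rw [nsmul_eq_mul]
    rw [hx, ZMod.natCast_eq_zero_iff, Nat.div_dvd_iff_dvd_mul hn (Nat.pos_of_ne_zero hn0)]
  have key : (Finset.univ.filter (fun x : ZMod δ => n • x = 0)).card
      = (Finset.range n).card := by
    apply Finset.card_nbij' (fun x => x.val / (δ / n)) (fun k => ((δ / n * k : ℕ) : ZMod δ))
    · intro x hx
      simp only [Finset.mem_coe, mem_filter, mem_univ, true_and, hmem] at hx
      simp only [Finset.mem_coe, mem_range]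
      rcases hx with ⟨c, hc⟩
      rw [hc, Nat.mul_div_cancel_left _ hd0]
      by_contra hcn
      push_neg at hcn
      have : δ ≤ x.val := by
        calc δ = δ / n * n := (Nat.div_mul_cancel hn).symm
        _ ≤ δ / n * c := Nat.mul_le_mul_left _ hcn
        _ = x.val := hc.symm
      exact absurd (ZMod.val_lt x) (not_lt.mpr this)
    · intro k hk
      simp only [Finset.mem_coe, mem_range] at hk
      simp only [Finset.mem_coe, mem_filter, mem_univ, true_and, hmem]
      have hlt : δ / n * k < δ := by
        calc δ / n * k < δ / n * n := by
              exact Nat.mul_lt_mul_of_le_of_lt (le_refl _) hk hd0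
        _ = δ := Nat.div_mul_cancel hn
      rw [ZMod.val_natCast_of_lt hlt]
      exact Dvd.intro k rfl
    · intro x hx
      simp only [Finset.mem_coe, mem_filter, mem_univ, true_and, hmem] at hx
      beta_reduce
      rw [Nat.mul_div_cancel' hx, ZMod.natCast_zmod_val]
    · intro k hk
      simp only [Finset.mem_coe, mem_range] at hk
      have hlt : δ / n * k < δ := by
        calc δ / n * k < δ / n * n := by
              exact Nat.mul_lt_mul_of_le_of_lt (le_refl _) hk hd0
        _ = δ := Nat.div_mul_cancel hn
      beta_reduce
      rw [ZMod.val_natCast_of_lt hlt, Nat.mul_div_cancel_left _ hd0]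
  rw [key, Finset.card_range]

lemma card_tor2 (δ n : ℕ) [NeZero δ] (hn : n ∣ δ) (hn0 : n ≠ 0) :
    (Finset.univ.filter (fun θ : ZMod δ × ZMod δ => n • θ = 0)).card = n ^ 2 := by
  have : (Finset.univ.filter (fun θ : ZMod δ × ZMod δ => n • θ = 0)) =
      (Finset.univ.filter (fun x : ZMod δ => n • x = 0)) ×ˢ
      (Finset.univ.filter (fun x : ZMod δ => n • x = 0)) := by
    ext θ
    simp only [mem_filter, mem_univ, true_and, Finset.mem_product, Prod.ext_iff,
      Prod.smul_fst, Prod.smul_snd, Prod.fst_zero, Prod.snd_zero]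
  rw [this, Finset.card_product, card_tor δ n hn hn0, sq]


lemma theta_mul_single (δ : ℕ) [NeZero δ] (m : ℕ) (τ : ZMod δ × ZMod δ) (hτ : m • τ = 0) :
    theta δ m * AddMonoidAlgebra.single τ 1 = theta δ m := by
  unfold theta
  rw [smul_mul_assoc, Finset.sum_mul]
  congr 1
  have key : ∀ θ : ZMod δ × ZMod δ, m • θ = 0 ↔ m • (θ + τ) = 0 := by
    intro θ; rw [smul_add, hτ, add_zero]
  rw [Finset.sum_congr rfl (fun θ _ => by
    rw [AddMonoidAlgebra.single_mul_single, mul_one])]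
  apply Finset.sum_bij' (fun θ _ => θ + τ) (fun θ _ => θ - τ)
  · intro θ hθ; simp only [mem_filter, mem_univ, true_and] at *; rw [← key]; exact hθ
  · intro θ hθ; simp only [mem_filter, mem_univ, true_and] at *
    rw [key]; simpa using hθ
  · intro θ _; simp
  · intro θ _; simp
  · intro θ _; rfl

/-- invariance under translation by m-torsion points -/
def TorInv (δ : ℕ) [NeZero δ] (m : ℕ) (x : AddMonoidAlgebra ℚ (ZMod δ × ZMod δ)) : Prop :=
  ∀ τ : ZMod δ × ZMod δ, m • τ = 0 → x * AddMonoidAlgebra.single τ 1 = x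

lemma torInv_theta (δ : ℕ) [NeZero δ] (m k : ℕ) (hkm : k ∣ m) :
    TorInv δ k (theta δ m) := by
  intro τ hτ
  apply theta_mul_single
  rcases hkm with ⟨c, rfl⟩
  rw [mul_comm, mul_smul, hτ, smul_zero]

lemma TorInv.zero (δ : ℕ) [NeZero δ] (m : ℕ) : TorInv δ m 0 := by
  intro τ _; rw [zero_mul]

lemma TorInv.sub {δ : ℕ} [NeZero δ] {m : ℕ} {x y : AddMonoidAlgebra ℚ (ZMod δ × ZMod δ)}
    (hx : TorInv δ m x) (hy : TorInv δ m y) : TorInv δ m (x - y) := by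
  intro τ hτ; rw [sub_mul, hx τ hτ, hy τ hτ]

lemma TorInv.mul_coprime {δ : ℕ} [NeZero δ] {m n : ℕ}
    {x y : AddMonoidAlgebra ℚ (ZMod δ × ZMod δ)}
    (hx : TorInv δ m x) (hy : TorInv δ n y) (hmn : Nat.Coprime m n) :
    TorInv δ (m * n) (x * y) := by
  intro τ hτ
  obtain ⟨u, v, huv⟩ := hmn.isCoprime
  set τ₁ : ZMod δ × ZMod δ := (v * n) • τ with hτ₁
  set τ₂ : ZMod δ × ZMod δ := (u * m) • τ with hτ₂
  have h1 : m • τ₁ = 0 := by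
    rw [hτ₁, ← natCast_zsmul, ← mul_smul]
    have : (m : ℤ) * (v * n) = v * (m * n : ℕ) := by push_cast; ring
    rw [this, mul_smul, natCast_zsmul, hτ, smul_zero]
  have h2 : n • τ₂ = 0 := by
    rw [hτ₂, ← natCast_zsmul, ← mul_smul]
    have : (n : ℤ) * (u * m) = u * (m * n : ℕ) := by push_cast; ring
    rw [this, mul_smul, natCast_zsmul, hτ, smul_zero]
  have hsum : τ₁ + τ₂ = τ := by
    rw [hτ₁, hτ₂, ← add_smul]
    have : v * n + u * m = 1 := by rw [← huv]; ring
    rw [this, one_smul]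
  calc x * y * AddMonoidAlgebra.single τ 1
      = x * y * (AddMonoidAlgebra.single τ₁ 1 * AddMonoidAlgebra.single τ₂ 1) := by
        rw [AddMonoidAlgebra.single_mul_single, one_mul, hsum]
    _ = (x * AddMonoidAlgebra.single τ₁ 1) * (y * AddMonoidAlgebra.single τ₂ 1) := by ring
    _ = x * y := by rw [hx τ₁ h1, hy τ₂ h2]

lemma TorInv.prod {δ : ℕ} [NeZero δ] {P : Finset ℕ} {m : ℕ → ℕ}
    {x : ℕ → AddMonoidAlgebra ℚ (ZMod δ × ZMod δ)}
    (hP : (P : Set ℕ).Pairwise (fun p q => Nat.Coprime (m p) (m q)))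
    (h : ∀ p ∈ P, TorInv δ (m p) (x p)) :
    TorInv δ (∏ p ∈ P, m p) (∏ p ∈ P, x p) := by
  classical
  induction P using Finset.induction_on with
  | empty =>
      intro τ hτ
      simp only [Finset.prod_empty]
      have : τ = 0 := by simpa using hτ
      simp [this]
      rfl
  | @insert a s ha ih =>
      rw [Finset.prod_insert ha, Finset.prod_insert ha]
      apply TorInv.mul_coprime (h a (Finset.mem_insert_self a s))
      · exact ih (hP.mono (by simp [Set.subset_def]; exact fun x hx => Or.inr hx))
          (fun p hp => h p (Finset.mem_insert_of_mem hp))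
      · apply Nat.Coprime.prod_right
        intro p hp
        exact hP (Finset.mem_insert_self a s) (Finset.mem_insert_of_mem hp)
          (fun hh => ha (hh ▸ hp))

lemma TorInv.of_dvd {δ : ℕ} [NeZero δ] {n d : ℕ} {x : AddMonoidAlgebra ℚ (ZMod δ × ZMod δ)}
    (hnd : n ∣ d) (hx : TorInv δ d x) : TorInv δ n x := by
  intro τ hτ
  apply hx
  rcases hnd with ⟨c, rfl⟩
  rw [mul_comm, mul_smul, hτ, smul_zero]

lemma torInv_bvartheta (δ : ℕ) [NeZero δ] (d : ℕ) (hd : d ∣ δ) (hd0 : d ≠ 0) :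
    TorInv δ d (bvartheta δ d) := by
  have hδ : δ ≠ 0 := NeZero.ne δ
  have h1 : ∏ p ∈ d.primeFactors, p ^ d.factorization p = d := by
    conv_rhs => rw [← Nat.factorization_prod_pow_eq_self hd0]
    exact (Nat.prod_factorization_eq_prod_primeFactors _).symm
  have hprod : ∏ p ∈ δ.primeFactors, p ^ d.factorization p = d := by
    rw [← Finset.prod_subset (Nat.primeFactors_mono hd hδ) (fun p _ hp => by
      rw [show d.factorization p = 0 from Finsupp.notMem_support_iff.mp
        (by rwa [Nat.support_factorization]), pow_zero])]
    exact h1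
  have key : TorInv δ (∏ p ∈ δ.primeFactors, p ^ d.factorization p) (bvartheta δ d) := by
    unfold bvartheta
    apply TorInv.prod
    · intro p hp q hq hpq
      exact Nat.Coprime.pow _ _ ((Nat.coprime_primes (Nat.prime_of_mem_primeFactors hp)
        (Nat.prime_of_mem_primeFactors hq)).mpr hpq)
    · intro p _
      apply TorInv.sub (torInv_theta δ _ _ dvd_rfl)
      split_ifs
      · exact torInv_theta δ _ _ (pow_dvd_pow p (Nat.le_succ _))
      · exact TorInv.zero δ _
  rwa [hprod] at key

lemma mul_theta_of_torInv {δ : ℕ} [NeZero δ] {n : ℕ} {x : AddMonoidAlgebra ℚ (ZMod δ × ZMod δ)}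
    (hx : TorInv δ n x) (hn : n ∣ δ) (hn0 : n ≠ 0) : x * theta δ n = x := by
  unfold theta
  rw [mul_smul_comm, Finset.mul_sum]
  rw [Finset.sum_congr rfl (fun τ hτ => hx τ (Finset.mem_filter.mp hτ).2)]
  rw [Finset.sum_const, card_tor2 δ n hn hn0]
  have hc : ((n : ℚ) ^ 2) ≠ 0 := pow_ne_zero _ (Nat.cast_ne_zero.mpr hn0)
  rw [← Nat.cast_smul_eq_nsmul ℚ, smul_smul]
  push_cast
  rw [inv_mul_cancel₀ hc, one_smul]

/-- `𝛔_δ(a)·ϑ_{δ/gcd(a,δ)} = 𝛔_δ(a)`. -/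
theorem bsigma_mul_theta (δ : ℕ) [NeZero δ] (a : ℕ) (ha : 0 < a) :
    bsigma δ a * theta δ (δ / Nat.gcd a δ) = bsigma δ a := by
  have hδ : δ ≠ 0 := NeZero.ne δ
  have hδpos : 0 < δ := Nat.pos_of_ne_zero hδ
  set g := Nat.gcd a δ with hg
  have hgδ : g ∣ δ := Nat.gcd_dvd_right a δ
  have hgpos : 0 < g := Nat.gcd_pos_of_pos_right a hδpos
  have hn : δ / g ∣ δ := Nat.div_dvd_of_dvd hgδ
  have hn0 : δ / g ≠ 0 := Nat.ne_of_gt (Nat.div_pos (Nat.le_of_dvd hδpos hgδ) hgpos)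
  unfold bsigma
  rw [Finset.sum_mul]
  apply Finset.sum_congr rfl
  intro d hd
  rw [Nat.mem_divisors] at hd
  obtain ⟨hdδ, _⟩ := hd
  have hd0 : d ≠ 0 := fun h => hδ (by simpa [h] using (h ▸ hdδ : (0:ℕ) ∣ δ))
  rw [smul_mul_assoc]
  by_cases hσ : sigmaBar (δ / d) a = 0
  · rw [hσ, zero_smul, zero_smul]
  · congr 1
    have hdvd_a : δ / d ∣ a := by
      by_contra hcon
      exact hσ (if_neg hcon)
    have hdg : δ / d ∣ g := Nat.dvd_gcd hdvd_a (Nat.div_dvd_of_dvd hdδ)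
    have hnd : δ / g ∣ d := by
      rw [Nat.div_dvd_iff_dvd_mul hgδ hgpos]
      obtain ⟨t, ht⟩ := hdg
      exact ⟨t, by rw [ht, mul_right_comm, Nat.div_mul_cancel hdδ]⟩
    exact mul_theta_of_torInv (TorInv.of_dvd hnd (torInv_bvartheta δ d hdδ hd0)) hn hn0
end
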